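/- Harish-Chandra lemma (orbit version): Let G be a reductive matrix Lie group, x ∈ 𝔤 ≅ 𝔤*, U = exp(𝔲) where 𝔲 is the sum of positive eigenspaces of ad(x_h), and 𝔮 = 𝔤^0 ⊕ 𝔲. Then the adjoint orbit U(x) equals the affine subspace x + ann(𝔮), where ann(𝔮) = 𝔲 is the trace-form annihilator of 𝔮. -/

import Mathlib

open Finset

attribute [local instance 100] LieRing.ofAssociativeRing

set_option maxHeartbeats 1000000

namespace HC18

variable {n : ℕ}

abbrev Mx (n : ℕ) := Matrix (Fin n) (Fin n) ℝ

noncomputable section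

/-- eigenspace of ad xh on the full matrix space -/
def K (xh : Mx n) (a : ℝ) : Submodule ℝ (Mx n) :=
  LinearMap.ker (LieAlgebra.ad ℝ (Mx n) xh - a • LinearMap.id)

lemma mem_K {xh W : Mx n} {a : ℝ} : W ∈ K xh a ↔ xh * W - W * xh = a • W := by
  simp only [K, LinearMap.mem_ker, LinearMap.sub_apply, LieAlgebra.ad_apply,
    LinearMap.smul_apply, LinearMap.id_apply, Ring.lie_def, sub_eq_zero]

lemma K_mul {xh Z V : Mx n} {a b : ℝ} (hZ : Z ∈ K xh a) (hV : V ∈ K xh b) :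
    Z * V ∈ K xh (a + b) := by
  rw [mem_K] at hZ hV ⊢
  have : xh * (Z * V) - Z * V * xh = (xh * Z - Z * xh) * V + Z * (xh * V - V * xh) := by
    noncomm_ring
  rw [this, hZ, hV, smul_mul_assoc, mul_smul_comm, add_smul]

lemma one_mem_K0 (xh : Mx n) : (1 : Mx n) ∈ K xh 0 := by
  rw [mem_K]; simp

lemma K_uniq' (xh : Mx n) {ι : Type} (e : ι → ℝ) (t : Finset ι)
    (he : ∀ i ∈ t, ∀ j ∈ t, e i = e j → i = j) :
    ∀ v : ι → Mx n, (∀ i ∈ t, v i ∈ K xh (e i)) → (∑ i ∈ t, v i = 0) →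
    ∀ i ∈ t, v i = 0 := by
  classical
  induction t using Finset.induction_on with
  | empty => simp
  | @insert i0 t hi0 ih =>
      intro v hv hsum
      have hmem : ∀ i ∈ insert i0 t, (e i - e i0) • v i
          = (xh * v i - v i * xh) - e i0 • v i := by
        intro i hi
        rw [mem_K.mp (hv i hi), sub_smul]
      have h1 : ∑ i ∈ insert i0 t, ((e i - e i0) • v i) = 0 := by
        rw [Finset.sum_congr rfl hmem, Finset.sum_sub_distrib, Finset.sum_sub_distrib,
          ← Finset.smul_sum, ← Finset.sum_mul, ← Finset.mul_sum, hsum]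
        simp
      rw [Finset.sum_insert hi0, sub_self, zero_smul, zero_add] at h1
      have he' : ∀ i ∈ t, ∀ j ∈ t, e i = e j → i = j := fun i hi j hj =>
        he i (Finset.mem_insert_of_mem hi) j (Finset.mem_insert_of_mem hj)
      have hvz : ∀ i ∈ t, v i = 0 := by
        intro i hi
        have hz := ih he' (fun i => (e i - e i0) • v i)
          (fun j hj => Submodule.smul_mem _ _ (hv j (Finset.mem_insert_of_mem hj))) h1 i hi
        have hne : e i - e i0 ≠ 0 := by
          intro h
          have : i = i0 := he i (Finset.mem_insert_of_mem hi) i0 (Finset.mem_insert_self _ _)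
            (by linarith [sub_eq_zero.mp h])
          exact hi0 (this ▸ hi)
        exact (smul_eq_zero.mp hz).resolve_left hne
      intro i hi
      rcases Finset.mem_insert.mp hi with rfl | hi'
      · have := hsum
        rw [Finset.sum_insert hi0, Finset.sum_congr rfl hvz, Finset.sum_const_zero,
          add_zero] at this
        exact this
      · exact hvz i hi'

lemma K_uniq (xh : Mx n) (s : Finset ℝ) (v : ℝ → Mx n)
    (hv : ∀ a ∈ s, v a ∈ K xh a) (hsum : ∑ a ∈ s, v a = 0) :
    ∀ a ∈ s, v a = 0 :=
  K_uniq' xh id s (fun _ _ _ _ h => h) v hv hsum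

lemma spectrum_finite (xh : Mx n) : {a : ℝ | K xh a ≠ ⊥}.Finite := by
  classical
  set S := {a : ℝ | K xh a ≠ ⊥} with hS
  have hvv : ∀ a : S, ∃ z : Mx n, z ∈ K xh (a : ℝ) ∧ z ≠ 0 := by
    rintro ⟨a, ha⟩
    obtain ⟨z, hz, hz0⟩ := Submodule.exists_mem_ne_zero_of_ne_bot ha
    exact ⟨z, hz, hz0⟩
  choose vv hvvK hvv0 using hvv
  have hli : LinearIndependent ℝ vv := by
    rw [linearIndependent_iff']
    intro t g hg i hit
    have := K_uniq' xh (fun i : S => (i : ℝ)) t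
      (fun i _ j _ hij => Subtype.ext hij)
      (fun i => g i • vv i)
      (fun j _ => Submodule.smul_mem _ _ (hvvK j)) hg i hit
    exact (smul_eq_zero.mp this).resolve_right (hvv0 i)
  have : Finite S := hli.finite
  exact Set.toFinite S

/-- filtration: sum of eigenspaces with eigenvalue ≥ c -/
def Mge (xh : Mx n) (c : ℝ) : Submodule ℝ (Mx n) :=
  ⨆ a : ℝ, ⨆ _ : c ≤ a, K xh a

lemma K_le_Mge (xh : Mx n) {a c : ℝ} (h : c ≤ a) : K xh a ≤ Mge xh c :=
  le_iSup_of_le a (le_iSup_of_le h le_rfl)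

lemma Mge_anti (xh : Mx n) {c d : ℝ} (h : c ≤ d) : Mge xh d ≤ Mge xh c := by
  refine iSup₂_le fun a ha => K_le_Mge xh (le_trans h ha)

lemma Mge_induction (xh : Mx n) {c : ℝ} {P : Mx n → Prop} {Z : Mx n} (hZ : Z ∈ Mge xh c)
    (hmem : ∀ a : ℝ, c ≤ a → ∀ W ∈ K xh a, P W)
    (h0 : P 0) (hadd : ∀ W V, P W → P V → P (W + V)) : P Z := by
  classical
  obtain ⟨f, hf, hsum⟩ := (Submodule.mem_iSup_iff_exists_finsupp _ Z).mp hZ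
  rw [← hsum]
  rw [Finsupp.sum]
  induction f.support using Finset.induction_on with
  | empty => simpa using h0
  | @insert a t ha ih =>
      rw [Finset.sum_insert ha]
      refine hadd _ _ ?_ ih
      by_cases hca : c ≤ a
      · exact hmem a hca (f a) (by simpa [iSup_pos hca] using hf a)
      · have : f a ∈ (⊥ : Submodule ℝ (Mx n)) := by
          have := hf a
          rwa [iSup_neg hca] at this
        have hfa : f a = 0 := by simpa using this
        rw [hfa]
        exact h0

lemma mul_mem_Mge (xh : Mx n) {c d : ℝ} {Z V : Mx n}
    (hZ : Z ∈ Mge xh c) (hV : V ∈ Mge xh d) : Z * V ∈ Mge xh (c + d) := by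
  refine Mge_induction xh (P := fun Y => Y * V ∈ Mge xh (c + d)) hZ
    (fun a ha W hW => ?_) (by simp) (fun W W' h h' => by
      show (W + W') * V ∈ _
      rw [add_mul]; exact Submodule.add_mem _ h h')
  refine Mge_induction xh (P := fun U => W * U ∈ Mge xh (c + d)) hV
    (fun b hb U hU => ?_) (by simp) (fun U U' h h' => by
      show W * (U + U') ∈ _
      rw [mul_add]; exact Submodule.add_mem _ h h')
  exact K_le_Mge xh (by linarith) (K_mul hW hU)

lemma bracket_mem_Mge (xh : Mx n) {c d : ℝ} {Z V : Mx n}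
    (hZ : Z ∈ Mge xh c) (hV : V ∈ Mge xh d) : Z * V - V * Z ∈ Mge xh (c + d) :=
  Submodule.sub_mem _ (mul_mem_Mge xh hZ hV)
    (by rw [add_comm c d]; exact mul_mem_Mge xh hV hZ)

lemma pow_mem_Mge (xh : Mx n) {c : ℝ} {W : Mx n} (hW : W ∈ Mge xh c) (k : ℕ) :
    W ^ k ∈ Mge xh (k * c) := by
  induction k with
  | zero => simpa using K_le_Mge xh le_rfl (one_mem_K0 xh)
  | succ k ih =>
      have := mul_mem_Mge xh ih hW
      rw [← pow_succ W k] at this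
      convert this using 2
      push_cast
      ring

lemma trace_K_eq_zero (xh : Mx n) {a b : ℝ} {Z V : Mx n}
    (hZ : Z ∈ K xh a) (hV : V ∈ K xh b) (hab : a + b ≠ 0) : (Z * V).trace = 0 := by
  rw [mem_K] at hZ hV
  have h1 : ((xh * Z - Z * xh) * V).trace = a * (Z * V).trace := by
    rw [hZ, smul_mul_assoc, Matrix.trace_smul, smul_eq_mul]
  have h2 : (Z * (xh * V - V * xh)).trace = b * (Z * V).trace := by
    rw [hV, mul_smul_comm, Matrix.trace_smul, smul_eq_mul]
  have h3 : (xh * Z - Z * xh) * V + Z * (xh * V - V * xh)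
      = xh * (Z * V) - (Z * V) * xh := by noncomm_ring
  have h4 : (a + b) * (Z * V).trace = 0 := by
    rw [add_mul, ← h1, ← h2, ← Matrix.trace_add, h3, Matrix.trace_sub,
      Matrix.trace_mul_comm, sub_self]
  exact (mul_eq_zero.mp h4).resolve_left hab

lemma trace_Mge_eq_zero (xh : Mx n) {c d : ℝ} {Z V : Mx n}
    (hZ : Z ∈ Mge xh c) (hV : V ∈ Mge xh d) (hcd : 0 < c + d) : (Z * V).trace = 0 := by
  refine Mge_induction xh (P := fun Y => (Y * V).trace = 0) hZ
    (fun a ha W hW => ?_) (by simp) (fun W W' h h' => by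
      show ((W + W') * V).trace = 0
      rw [add_mul, Matrix.trace_add, h, h', add_zero])
  refine Mge_induction xh (P := fun U => (W * U).trace = 0) hV
    (fun b hb U hU => ?_) (by simp) (fun U U' h h' => by
      show (W * (U + U')).trace = 0
      rw [mul_add, Matrix.trace_add, h, h', add_zero])
  exact trace_K_eq_zero xh hW hU (by linarith)

/-- bound data: B bounds the spectrum, s is a positive lower bound for
positive eigenvalues, T enumerates positive eigenvalues. -/
lemma spectrum_data (xh : Mx n) : ∃ (B s : ℝ) (T : Finset ℝ),
    0 < B ∧ 0 < s ∧
    (∀ a : ℝ, B ≤ a → K xh a = ⊥) ∧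
    (∀ a : ℝ, (0 < a ∧ K xh a ≠ ⊥) ↔ a ∈ T) ∧
    (∀ a ∈ T, s ≤ a) := by
  classical
  have hfin : {a : ℝ | K xh a ≠ ⊥}.Finite := spectrum_finite xh
  have hfinT : {a : ℝ | 0 < a ∧ K xh a ≠ ⊥}.Finite :=
    hfin.subset (fun a ha => ha.2)
  set T := hfinT.toFinset with hT
  have hTmem : ∀ a : ℝ, (0 < a ∧ K xh a ≠ ⊥) ↔ a ∈ T := by
    intro a; rw [hT, Set.Finite.mem_toFinset]; rfl
  obtain ⟨B0, hB0⟩ := hfin.bddAbove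
  set s : ℝ := if hTe : T.Nonempty then min (T.min' hTe) 1 else 1 with hs
  have hspos : 0 < s := by
    rw [hs]
    split_ifs with hTe
    · refine lt_min ?_ one_pos
      have := (hTmem _).mpr (T.min'_mem hTe)
      exact this.1
    · exact one_pos
  have hslb : ∀ a ∈ T, s ≤ a := by
    intro a ha
    rw [hs]
    split_ifs with hTe
    · exact le_trans (min_le_left _ _) (T.min'_le a ha)
    · exact absurd ⟨a, ha⟩ hTe
  refine ⟨max B0 0 + 1, s, T, by positivity, hspos, ?_, hTmem, hslb⟩
  intro a ha
  by_contra hne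
  have : a ∈ upperBounds.{0} {a : ℝ | K xh a ≠ ⊥} |> fun _ => True := trivial
  have hmem : a ∈ {a : ℝ | K xh a ≠ ⊥} := hne
  have := hB0 hmem
  have : a ≤ max B0 0 := le_trans this (le_max_left _ _)
  linarith

lemma exp_nilp (W : Mx n) (m : ℕ) (h : W ^ m = 0) :
    NormedSpace.exp W = ∑ i ∈ range m, ((i.factorial : ℝ))⁻¹ • W ^ i := by
  rw [NormedSpace.exp_eq_tsum (𝕂 := ℝ)]
  exact tsum_eq_sum (fun i hi => by
    have hWi : W ^ i = 0 := pow_eq_zero_of_le (le_of_not_gt (fun hc => hi (mem_range.mpr hc))) h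
    simp [hWi])

lemma adpow_eq (W x : Mx n) (k : ℕ) :
    ((LieAlgebra.ad ℝ (Mx n) W) ^ k) x
      = ∑ ij ∈ Finset.HasAntidiagonal.antidiagonal k,
          ((-1 : ℝ) ^ ij.2 * (k.choose ij.1 : ℝ)) • (W ^ ij.1 * x * W ^ ij.2) := by
  have hD : LieAlgebra.ad ℝ (Mx n) W
      = LinearMap.mulLeft ℝ W + -LinearMap.mulRight ℝ W := by
    ext Z
    simp [LieAlgebra.ad_apply, Ring.lie_def, sub_eq_add_neg]
  have hc0 : Commute (LinearMap.mulLeft ℝ W) (LinearMap.mulRight ℝ W) :=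
    LinearMap.commute_mulLeft_right W W
  have hcomm : Commute (LinearMap.mulLeft ℝ W) (-LinearMap.mulRight ℝ W) :=
    hc0.neg_right
  rw [hD, hcomm.add_pow']
  rw [LinearMap.coe_sum, Finset.sum_apply]
  refine Finset.sum_congr rfl ?_
  rintro ⟨i, j⟩ hij
  have hneg : -LinearMap.mulRight ℝ W = (-1 : ℝ) • LinearMap.mulRight ℝ W :=
    (neg_one_smul ℝ _).symm
  have h1 : (-LinearMap.mulRight ℝ W) ^ j = ((-1 : ℝ) ^ j) • LinearMap.mulRight ℝ (W ^ j) := by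
    rw [hneg, smul_pow, LinearMap.pow_mulRight]
  simp only [LinearMap.smul_apply, Module.End.mul_apply, h1, LinearMap.pow_mulLeft,
    LinearMap.mulLeft_apply, LinearMap.mulRight_apply]
  calc (k.choose i) • (W ^ i * ((-1 : ℝ) ^ j • (x * W ^ j)))
      = ((k.choose i : ℝ) * (-1 : ℝ) ^ j) • (W ^ i * (x * W ^ j)) := by
        rw [mul_smul_comm, ← Nat.cast_smul_eq_nsmul ℝ, smul_smul]
    _ = ((-1 : ℝ) ^ j * (k.choose i : ℝ)) • (W ^ i * x * W ^ j) := by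
        rw [mul_comm ((k.choose i : ℝ)) _, mul_assoc]

lemma conj_exp (W x : Mx n) (m N : ℕ) (hm : W ^ m = 0) (hmN : 2 * m ≤ N) :
    NormedSpace.exp W * x * NormedSpace.exp (-W)
      = ∑ k ∈ range N, ((k.factorial : ℝ))⁻¹ • (((LieAlgebra.ad ℝ (Mx n) W) ^ k) x) := by
  classical
  set T : ℕ × ℕ → Mx n := fun p =>
    (((p.1.factorial : ℝ))⁻¹ * ((p.2.factorial : ℝ))⁻¹ * (-1 : ℝ) ^ p.2)
      • (W ^ p.1 * x * W ^ p.2) with hT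
  have hTzero : ∀ p : ℕ × ℕ, (m ≤ p.1 ∨ m ≤ p.2) → T p = 0 := by
    rintro ⟨i, j⟩ (h | h)
    · have : W ^ i = 0 := pow_eq_zero_of_le h hm
      simp [hT, this]
    · have : W ^ j = 0 := pow_eq_zero_of_le h hm
      simp [hT, this]
  have hnegm : (-W) ^ m = 0 := by
    have : (-W) ^ m = (-1 : ℝ) ^ m • W ^ m := by rw [← smul_pow, neg_one_smul]
    rw [this, hm, smul_zero]
  have step1 : NormedSpace.exp W * x * NormedSpace.exp (-W)
      = ∑ p ∈ Finset.range m ×ˢ Finset.range m, T p := by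
    rw [exp_nilp W m hm, exp_nilp (-W) m hnegm, Finset.sum_product]
    rw [Finset.sum_mul, Finset.sum_mul_sum]
    refine Finset.sum_congr rfl fun i _ => Finset.sum_congr rfl fun j _ => ?_
    have hnw : (-W) ^ j = ((-1 : ℝ) ^ j) • W ^ j := by
      rw [← smul_pow, neg_one_smul]
    rw [hnw, hT]
    simp only [smul_mul_assoc, mul_smul_comm, smul_smul]
    congr 1
    ring
  have hsub : Finset.range m ×ˢ Finset.range m ⊆ (range N).biUnion Finset.HasAntidiagonal.antidiagonal := by
    rintro ⟨i, j⟩ hp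
    rw [Finset.mem_product, Finset.mem_range, Finset.mem_range] at hp
    refine Finset.mem_biUnion.mpr ⟨i + j, Finset.mem_range.mpr (by omega), ?_⟩
    simp [Finset.HasAntidiagonal.mem_antidiagonal]
  have hdisj : (↑(range N) : Set ℕ).PairwiseDisjoint Finset.HasAntidiagonal.antidiagonal := by
    intro a _ b _ hab
    simp only [Function.onFun]
    rw [Finset.disjoint_left]
    rintro ⟨i, j⟩ hi hj
    rw [Finset.HasAntidiagonal.mem_antidiagonal] at hi hj
    exact hab (hi ▸ hj)
  have step3 : ∑ k ∈ range N, ((k.factorial : ℝ))⁻¹ • (((LieAlgebra.ad ℝ (Mx n) W) ^ k) x)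
      = ∑ p ∈ (range N).biUnion Finset.HasAntidiagonal.antidiagonal, T p := by
    rw [Finset.sum_biUnion hdisj]
    refine Finset.sum_congr rfl fun k _ => ?_
    rw [adpow_eq, Finset.smul_sum]
    refine Finset.sum_congr rfl fun ij hij => ?_
    rw [Finset.HasAntidiagonal.mem_antidiagonal] at hij
    rw [smul_smul, hT]
    congr 1
    have hfact : ((k.factorial : ℝ)) = (k.choose ij.1 : ℝ) * (ij.1.factorial : ℝ) * (ij.2.factorial : ℝ) := by
      rw [← Nat.cast_mul, ← Nat.cast_mul]
      congr 1
      rw [← hij]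
      have hsymm : (ij.1 + ij.2).choose ij.1 = (ij.1 + ij.2).choose ij.2 := by
        rw [← Nat.choose_symm (Nat.le_add_right ij.1 ij.2), Nat.add_sub_cancel_left]
      rw [hsymm]
      exact (Nat.add_choose_mul_factorial_mul_factorial ij.1 ij.2).symm
    rw [hfact]
    have h1 : (ij.1.factorial : ℝ) ≠ 0 := Nat.cast_ne_zero.mpr (Nat.factorial_ne_zero _)
    have h2 : (ij.2.factorial : ℝ) ≠ 0 := Nat.cast_ne_zero.mpr (Nat.factorial_ne_zero _)
    have hc : (k.choose ij.1 : ℝ) ≠ 0 := by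
      have : 0 < k.choose ij.1 := Nat.choose_pos (by omega)
      exact_mod_cast this.ne'
    field_simp
  rw [step1, step3]
  refine Finset.sum_subset hsub fun p hp hnp => hTzero p ?_
  rw [Finset.mem_product] at hnp
  simp only [Finset.mem_range, not_and_or, not_lt] at hnp
  exact hnp

lemma eq_zero_of_trace_mul_transpose (A : Mx n) (h : (A * A.transpose).trace = 0) : A = 0 := by
  have hdiag : ∀ i, (A * A.transpose) i i = ∑ j, A i j * A i j := by
    intro i
    simp [Matrix.mul_apply, Matrix.transpose_apply]
  rw [Matrix.trace] at h
  have h2 : ∑ i, ∑ j, A i j * A i j = 0 := by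
    rw [← h]
    exact Finset.sum_congr rfl fun i _ => (hdiag i).symm
  have h3 : ∀ i ∈ Finset.univ (α := Fin n), ∑ j, A i j * A i j = 0 := by
    rw [← Finset.sum_eq_zero_iff_of_nonneg]
    · exact h2
    · intro i _
      exact Finset.sum_nonneg fun j _ => mul_self_nonneg _
  ext i j
  have h4 := h3 i (Finset.mem_univ i)
  have h5 : ∀ j ∈ Finset.univ (α := Fin n), A i j * A i j = 0 := by
    rw [← Finset.sum_eq_zero_iff_of_nonneg]
    · exact h4
    · exact fun j _ => mul_self_nonneg _
  have := h5 j (Finset.mem_univ j)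
  simpa [mul_self_eq_zero] using this

end
end HC18

open HC18 Finset in
theorem stmt_18 {n : ℕ}
    (𝔤 : LieSubalgebra ℝ (Matrix (Fin n) (Fin n) ℝ))
    (hΘ : ∀ Z ∈ 𝔤, Z.transpose ∈ 𝔤)
    (x xh : Matrix (Fin n) (Fin n) ℝ) (hx : x ∈ 𝔤) (hxh : xh ∈ 𝔤)
    (E : ℝ → Submodule ℝ (Matrix (Fin n) (Fin n) ℝ))
    (hE : ∀ a, E a = (𝔤 : Submodule ℝ (Matrix (Fin n) (Fin n) ℝ)) ⊓
      LinearMap.ker (LieAlgebra.ad ℝ (Matrix (Fin n) (Fin n) ℝ) xh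
        - a • LinearMap.id))
    (hdiag : (⨆ a : ℝ, E a) = (𝔤 : Submodule ℝ (Matrix (Fin n) (Fin n) ℝ)))
    (hx0 : x ∈ E 0)
    (hcomm : ∀ Z ∈ 𝔤, ⁅x, Z⁆ = 0 → Z ∈ E 0)
    (u q : Submodule ℝ (Matrix (Fin n) (Fin n) ℝ))
    (hu : u = ⨆ a : ℝ, ⨆ _ : 0 < a, E a)
    (hq : q = E 0 ⊔ u) :
    -- U(x) = x + ann(𝔮):
    {y | ∃ W ∈ u, y = NormedSpace.exp W * x * (NormedSpace.exp W)⁻¹}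
      = {y | ∃ Z, (Z ∈ 𝔤 ∧ ∀ W ∈ q, (Z * W).trace = 0) ∧ y = x + Z} := by
  classical
  -- basic conversions
  have hEK : ∀ a, E a = (𝔤 : Submodule ℝ (Mx n)) ⊓ K xh a := hE
  have hE_le_K : ∀ a, E a ≤ K xh a := fun a => by rw [hEK a]; exact inf_le_right
  have hE_le_g : ∀ a, E a ≤ (𝔤 : Submodule ℝ (Mx n)) := fun a => by
    rw [hEK a]; exact inf_le_left
  have hxK : x ∈ K xh 0 := (hE_le_K 0) hx0
  have hxM : x ∈ Mge xh 0 := K_le_Mge xh le_rfl hxK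
  obtain ⟨B, s, T, hB0, hs0, hBbot, hTmem, hTs⟩ := spectrum_data xh
  have hTB : ∀ a ∈ T, a < B := by
    intro a ha
    by_contra hc
    exact ((hTmem a).mpr ha).2 (hBbot a (le_of_not_gt hc))
  -- u, q filtration bounds
  have hu_le_M : u ≤ Mge xh s := by
    rw [hu]
    refine iSup₂_le fun a ha => ?_
    by_cases hKa : K xh a = ⊥
    · refine le_trans (hE_le_K a) ?_
      rw [hKa]
      exact bot_le
    · exact le_trans (hE_le_K a) (K_le_Mge xh (hTs a ((hTmem a).mp ⟨ha, hKa⟩)))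
  have hu_le_g : u ≤ (𝔤 : Submodule ℝ (Mx n)) := by
    rw [hu]
    exact iSup₂_le fun a _ => hE_le_g a
  have hq_le_M : q ≤ Mge xh 0 := by
    rw [hq]
    refine sup_le (le_trans (hE_le_K 0) (K_le_Mge xh le_rfl)) ?_
    exact le_trans hu_le_M (Mge_anti xh (le_of_lt hs0))
  -- Mge vanishing beyond B, nilpotency exponent
  have hMbot : ∀ c, B ≤ c → Mge xh c = ⊥ := by
    intro c hc
    rw [eq_bot_iff]
    refine iSup₂_le fun a ha => ?_
    rw [hBbot a (le_trans hc ha)]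
  obtain ⟨m₁, hm₁⟩ := exists_nat_ge (B / s)
  set m₀ : ℕ := m₁ + 1 with hm₀
  have hm₀B : B ≤ (m₀ : ℝ) * s := by
    have h1 : B / s ≤ (m₀ : ℝ) := le_trans hm₁ (by rw [hm₀]; push_cast; linarith)
    calc B = (B / s) * s := by field_simp
    _ ≤ (m₀ : ℝ) * s := by nlinarith
  have hnil : ∀ V ∈ Mge xh s, V ^ m₀ = 0 := by
    intro V hV
    have h1 := pow_mem_Mge xh hV m₀
    rw [hMbot _ hm₀B] at h1
    simpa using h1
  -- the exponential-conjugation map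
  set N' : ℕ := 2 * m₀ - 1 with hN'
  have hNeq : 2 * m₀ = N' + 1 := by omega
  set D : Mx n → (Mx n →ₗ[ℝ] Mx n) := fun V => LieAlgebra.ad ℝ (Mx n) V with hD
  set G : Mx n → Mx n := fun V =>
    ∑ k ∈ Finset.range N', (((k+1).factorial : ℝ))⁻¹ • (((D V) ^ (k+1)) x) with hG
  have hconj : ∀ V ∈ Mge xh s,
      NormedSpace.exp V * x * NormedSpace.exp (-V) = x + G V := by
    intro V hV
    rw [conj_exp V x m₀ (N' + 1) (hnil V hV) (by omega)]
    rw [Finset.sum_range_succ']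
    simp only [pow_zero, Nat.factorial_zero, Nat.cast_one, inv_one, one_smul,
      Module.End.one_apply]
    rw [add_comm]
  -- membership properties of the series
  have hDpow_g : ∀ V ∈ 𝔤, ∀ k : ℕ, ((D V) ^ k) x ∈ (𝔤 : Submodule ℝ (Mx n)) := by
    intro V hV k
    induction k with
    | zero => simpa using hx
    | succ k ih =>
        rw [pow_succ']
        have : (D V * (D V) ^ k) x = ⁅V, ((D V) ^ k) x⁆ := rfl
        rw [this]
        exact 𝔤.lie_mem hV ih
  have hbr : ∀ (V Y : Mx n), (D V) Y = V * Y - Y * V := by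
    intro V Y
    simp [hD, LieAlgebra.ad_apply, Ring.lie_def]
  have hDpow_M : ∀ V ∈ Mge xh s, ∀ k : ℕ, ((D V) ^ k) x ∈ Mge xh (k * s) := by
    intro V hV k
    induction k with
    | zero => simpa using hxM
    | succ k ih =>
        rw [pow_succ']
        have heq : (D V * (D V) ^ k) x = V * (((D V) ^ k) x) - (((D V) ^ k) x) * V := by
          rw [Module.End.mul_apply, hbr]
        rw [heq]
        have := bracket_mem_Mge xh hV ih
        have harith : s + (k : ℝ) * s = ((k+1 : ℕ) : ℝ) * s := by push_cast; ring
        rw [harith] at this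
        exact this
  have hGg : ∀ V ∈ 𝔤, G V ∈ (𝔤 : Submodule ℝ (Mx n)) := by
    intro V hV
    exact Submodule.sum_mem _ fun k _ => Submodule.smul_mem _ _ (hDpow_g V hV (k+1))
  have hGM : ∀ V ∈ Mge xh s, G V ∈ Mge xh s := by
    intro V hV
    refine Submodule.sum_mem _ fun k _ => Submodule.smul_mem _ _ ?_
    refine Mge_anti xh ?_ (hDpow_M V hV (k+1))
    have : (1 : ℝ) ≤ ((k+1 : ℕ) : ℝ) := by push_cast; linarith
    nlinarith
  -- key estimate for successive approximation
  have hest : ∀ V ∈ Mge xh s, ∀ c' : ℝ, s ≤ c' → ∀ δ ∈ Mge xh c',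
      G (V + δ) - G V - (δ * x - x * δ) ∈ Mge xh (s + c') := by
    intro V hV c' hsc' δ hδ
    have hδs : δ ∈ Mge xh s := Mge_anti xh hsc' hδ
    have hVδ : V + δ ∈ Mge xh s := Submodule.add_mem _ hV hδs
    -- the difference of iterated brackets
    have claim : ∀ j : ℕ, ((D (V + δ)) ^ (j+1)) x - ((D V) ^ (j+1)) x
        ∈ Mge xh ((j : ℝ) * s + c') := by
      intro j
      induction j with
      | zero =>
          have h1 : ((D (V + δ)) ^ 1) x - ((D V) ^ 1) x = δ * x - x * δ := by
            simp only [pow_one, hbr]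
            noncomm_ring
          rw [h1]
          have := bracket_mem_Mge xh hδ hxM
          have harith : ((0:ℕ) : ℝ) * s + c' = c' + 0 := by push_cast; ring
          rw [harith]
          exact this
      | succ j ih =>
          have hsplit : ((D (V + δ)) ^ (j+2)) x - ((D V) ^ (j+2)) x
              = (D (V + δ)) (((D (V + δ)) ^ (j+1)) x - ((D V) ^ (j+1)) x)
                + (D δ) (((D V) ^ (j+1)) x) := by
            have e1 : ((D (V + δ)) ^ (j+2)) x = (D (V + δ)) (((D (V + δ)) ^ (j+1)) x) := by
              rw [pow_succ']
              rfl
            have e2 : ((D V) ^ (j+2)) x = (D V) (((D V) ^ (j+1)) x) := by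
              rw [pow_succ']
              rfl
            rw [e1, e2, map_sub]
            have e3 : ∀ Y, (D (V + δ)) Y = (D V) Y + (D δ) Y := by
              intro Y
              rw [hbr, hbr, hbr]
              noncomm_ring
            rw [e3, e3]
            abel
          rw [hsplit]
          refine Submodule.add_mem _ ?_ ?_
          · have h1 : (D (V + δ)) (((D (V + δ)) ^ (j+1)) x - ((D V) ^ (j+1)) x)
                = (V + δ) * (((D (V + δ)) ^ (j+1)) x - ((D V) ^ (j+1)) x)
                  - (((D (V + δ)) ^ (j+1)) x - ((D V) ^ (j+1)) x) * (V + δ) := hbr _ _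
            rw [h1]
            have := bracket_mem_Mge xh hVδ ih
            have harith : s + ((j : ℝ) * s + c') = ((j+1 : ℕ) : ℝ) * s + c' := by
              push_cast; ring
            rwa [harith] at this
          · have h1 : (D δ) (((D V) ^ (j+1)) x)
                = δ * (((D V) ^ (j+1)) x) - (((D V) ^ (j+1)) x) * δ := hbr _ _
            rw [h1]
            have := bracket_mem_Mge xh hδ (hDpow_M V hV (j+1))
            have harith : c' + ((j+1 : ℕ) : ℝ) * s = ((j+1 : ℕ) : ℝ) * s + c' := by ring
            rwa [harith] at this
    -- assemble the sum
    have hN'pos : 1 ≤ N' := by omega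
    obtain ⟨N'', hN''⟩ : ∃ N'', N' = N'' + 1 := ⟨N' - 1, by omega⟩
    have hGdiff : G (V + δ) - G V
        = ∑ k ∈ Finset.range N',
            (((k+1).factorial : ℝ))⁻¹ • (((D (V + δ)) ^ (k+1)) x - ((D V) ^ (k+1)) x) := by
      rw [hG]
      rw [← Finset.sum_sub_distrib]
      exact Finset.sum_congr rfl fun k _ => (smul_sub _ _ _).symm
    rw [hGdiff, hN'', Finset.sum_range_succ']
    have hfirst : (((0+1).factorial : ℝ))⁻¹ • (((D (V + δ)) ^ (0+1)) x - ((D V) ^ (0+1)) x)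
        = δ * x - x * δ := by
      simp only [zero_add, pow_one, hbr, Nat.factorial_one, Nat.cast_one, inv_one, one_smul]
      noncomm_ring
    rw [hfirst, add_sub_cancel_right]
    refine Submodule.sum_mem _ fun k _ => Submodule.smul_mem _ _ ?_
    refine Mge_anti xh ?_ (claim (k+1))
    have : (1 : ℝ) ≤ ((k+1 : ℕ) : ℝ) := by push_cast; linarith
    nlinarith
  -- decomposition into eigencomponents
  have hdecomp : ∀ Z ∈ 𝔤, ∃ f : ℝ →₀ Mx n,
      (∀ a, f a ∈ E a) ∧ (f.sum fun _ m => m) = Z := by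
    intro Z hZ
    have : Z ∈ ⨆ a : ℝ, E a := by rw [hdiag]; exact hZ
    exact (Submodule.mem_iSup_iff_exists_finsupp _ _).mp this
  have hdecomp_ge : ∀ c : ℝ, ∀ Z ∈ 𝔤, Z ∈ Mge xh c → ∃ f : ℝ →₀ Mx n,
      (∀ a, f a ∈ E a) ∧ (∀ a ∈ f.support, c ≤ a) ∧ (f.sum fun _ m => m) = Z := by
    intro c Z hZ hZM
    obtain ⟨f, hfE, hfsum⟩ := hdecomp Z hZ
    obtain ⟨g, hgK, hgsum⟩ := (Submodule.mem_iSup_iff_exists_finsupp _ _).mp hZM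
    have hgK' : ∀ a, g a ∈ K xh a := by
      intro a
      by_cases hca : c ≤ a
      · have := hgK a; rwa [iSup_pos hca] at this
      · have := hgK a; rw [iSup_neg hca] at this
        have hz : g a = 0 := by simpa using this
        rw [hz]; exact Submodule.zero_mem _
    have hg0 : ∀ a, ¬ c ≤ a → g a = 0 := by
      intro a hca
      have := hgK a; rw [iSup_neg hca] at this
      simpa using this
    set t := f.support ∪ g.support with ht
    have hft : ∑ a ∈ t, f a = Z := by
      rw [← hfsum, Finsupp.sum]
      exact (Finset.sum_subset Finset.subset_union_left
        (fun a _ ha => Finsupp.notMem_support_iff.mp ha)).symm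
    have hgt : ∑ a ∈ t, g a = Z := by
      rw [← hgsum, Finsupp.sum]
      exact (Finset.sum_subset Finset.subset_union_right
        (fun a _ ha => Finsupp.notMem_support_iff.mp ha)).symm
    have huniq := K_uniq xh t (fun a => f a - g a)
      (fun a _ => Submodule.sub_mem _ (hE_le_K a (hfE a)) (hgK' a))
      (by rw [Finset.sum_sub_distrib, hft, hgt, sub_self])
    refine ⟨f, hfE, ?_, hfsum⟩
    intro a ha
    by_contra hca
    have hat : a ∈ t := Finset.mem_union_left _ ha
    have := huniq a hat
    have hfa : f a = g a := by rwa [sub_eq_zero] at this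
    have : f a = 0 := by rw [hfa]; exact hg0 a hca
    exact (Finsupp.mem_support_iff.mp ha) this
  -- surjectivity of ad x on eigenspaces with nonzero eigenvalue
  have adx_surj : ∀ a : ℝ, a ≠ 0 → ∀ Z ∈ E a, ∃ δ ∈ E a, x * δ - δ * x = Z := by
    intro a ha Z hZ
    have hmap : ∀ W ∈ E a, x * W - W * x ∈ E a := by
      intro W hW
      rw [hEK] at hW ⊢
      refine ⟨?_, ?_⟩
      · have := 𝔤.lie_mem hx (hW.1 : W ∈ 𝔤)
        simpa [Ring.lie_def] using this
      · have h1 := K_mul hxK hW.2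
        have h2 := K_mul hW.2 hxK
        rw [zero_add] at h1
        rw [add_zero] at h2
        exact Submodule.sub_mem _ h1 h2
    set φ : E a →ₗ[ℝ] E a :=
      LinearMap.restrict ((LinearMap.mulLeft ℝ x) - (LinearMap.mulRight ℝ x))
        (fun W hW => by
          have := hmap W hW
          simpa using this) with hφ
    have hφinj : Function.Injective φ := by
      rw [← LinearMap.ker_eq_bot, eq_bot_iff]
      rintro ⟨W, hW⟩ hker
      have hW0 : x * W - W * x = 0 := by
        have := congrArg (Subtype.val) (LinearMap.mem_ker.mp hker)
        simpa [hφ, LinearMap.restrict_apply] using this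
      have hWE0 : W ∈ E 0 := by
        refine hcomm W (hE_le_g a hW) ?_
        simpa [Ring.lie_def, sub_eq_zero] using hW0
      have hK0 : xh * W - W * xh = (0 : ℝ) • W := mem_K.mp (hE_le_K 0 hWE0)
      have hKa : xh * W - W * xh = a • W := mem_K.mp (hE_le_K a hW)
      have : a • W = 0 := by rw [← hKa, hK0, zero_smul]
      have hW00 : W = 0 := by
        rcases smul_eq_zero.mp this with h | h
        · exact absurd h ha
        · exact h
      simp only [Submodule.mem_bot]
      exact Subtype.ext hW00
    have hφsurj : Function.Surjective φ :=
      (LinearMap.injective_iff_surjective).mp hφinj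
    obtain ⟨⟨δ, hδ⟩, hδeq⟩ := hφsurj ⟨Z, hZ⟩
    refine ⟨δ, hδ, ?_⟩
    have := congrArg (Subtype.val) hδeq
    simpa [hφ, LinearMap.restrict_apply] using this
  -- 𝔤 ∩ Mge s ≤ u
  have hgM_le_u : ∀ V ∈ 𝔤, V ∈ Mge xh s → V ∈ u := by
    intro V hVg hVM
    obtain ⟨f, hfE, hfsupp, hfsum⟩ := hdecomp_ge s V hVg hVM
    rw [← hfsum, Finsupp.sum]
    refine Submodule.sum_mem _ fun a ha => ?_
    have hpos : 0 < a := lt_of_lt_of_le hs0 (hfsupp a ha)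
    have hle : E a ≤ u := by
      rw [hu]
      exact le_iSup_of_le a (le_iSup (fun _ : 0 < a => E a) hpos)
    exact hle (hfE a)
  have hMc_bot : ∀ c : ℝ, 0 < c → (T.filter (fun a => c ≤ a)) = ∅ → Mge xh c = ⊥ := by
    intro c hc hfe
    rw [eq_bot_iff]
    refine iSup₂_le fun a ha => ?_
    by_cases hKa : K xh a = ⊥
    · rw [hKa]
    · exfalso
      have haT : a ∈ T := (hTmem a).mp ⟨lt_of_lt_of_le hc ha, hKa⟩
      have : a ∈ T.filter (fun b => c ≤ b) := Finset.mem_filter.mpr ⟨haT, ha⟩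
      rw [hfe] at this
      exact absurd this (Finset.notMem_empty a)
  -- the successive approximation
  have key : ∀ t : ℕ, ∀ c : ℝ, 0 < c → (T.filter (fun a => c ≤ a)).card ≤ t →
      ∀ V ∈ 𝔤, V ∈ Mge xh s → ∀ R ∈ 𝔤, R ∈ Mge xh c →
      ∃ V', V' ∈ 𝔤 ∧ V' ∈ Mge xh s ∧ G V' = G V + R := by
    intro t
    induction t with
    | zero =>
        intro c hc hcard V hVg hVM R hRg hRM
        have hfe := Finset.card_eq_zero.mp (Nat.le_zero.mp hcard)
        have hR0 : R = 0 := by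
          have h1 := hRM
          rw [hMc_bot c hc hfe] at h1
          simpa using h1
        exact ⟨V, hVg, hVM, by rw [hR0, add_zero]⟩
    | succ t ih =>
        intro c hc hcard V hVg hVM R hRg hRM
        by_cases hfe : (T.filter (fun a => c ≤ a)) = ∅
        · have hR0 : R = 0 := by
            have h1 := hRM
            rw [hMc_bot c hc hfe] at h1
            simpa using h1
          exact ⟨V, hVg, hVM, by rw [hR0, add_zero]⟩
        · have hne : (T.filter (fun a => c ≤ a)).Nonempty :=
            Finset.nonempty_of_ne_empty hfe
          set c' := (T.filter (fun a => c ≤ a)).min' hne with hc'def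
          have hc'mem := (T.filter (fun a => c ≤ a)).min'_mem hne
          have hc'T : c' ∈ T := (Finset.mem_filter.mp hc'mem).1
          have hcc' : c ≤ c' := (Finset.mem_filter.mp hc'mem).2
          have hc'pos : 0 < c' := ((hTmem c').mpr hc'T).1
          have hsc' : s ≤ c' := hTs c' hc'T
          have hc'B : c' < B := hTB c' hc'T
          obtain ⟨g, hgE, hgsupp, hgsum⟩ := hdecomp_ge c R hRg hRM
          have hgsupp' : ∀ a ∈ g.support, c' ≤ a := by
            intro a ha
            have h1 : K xh a ≠ ⊥ := by
              rw [Submodule.ne_bot_iff]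
              exact ⟨g a, hE_le_K a (hgE a), Finsupp.mem_support_iff.mp ha⟩
            have haT : a ∈ T := (hTmem a).mp ⟨lt_of_lt_of_le hc (hgsupp a ha), h1⟩
            exact (T.filter (fun b => c ≤ b)).min'_le a
              (Finset.mem_filter.mpr ⟨haT, hgsupp a ha⟩)
          set nxt : ℝ := if h : (T.filter (fun a => c' < a)).Nonempty then
              (T.filter (fun a => c' < a)).min' h else B + 1 with hnxt
          have hnxt_gt : c' < nxt := by
            rw [hnxt]
            split_ifs with h
            · exact (Finset.mem_filter.mp ((T.filter _).min'_mem h)).2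
            · linarith
          have hnxt_le : ∀ a ∈ T, c' < a → nxt ≤ a := by
            intro a haT hca
            rw [hnxt]
            split_ifs with h
            · exact Finset.min'_le _ a (Finset.mem_filter.mpr ⟨haT, hca⟩)
            · exact absurd ⟨a, Finset.mem_filter.mpr ⟨haT, hca⟩⟩ h
          set d : ℝ := min (s + c') nxt with hd
          have hdc' : c' < d := lt_min (by linarith) hnxt_gt
          have hd0 : 0 < d := lt_trans hc'pos hdc'
          have hcard' : (T.filter (fun a => d ≤ a)).card ≤ t := by
            have hsub2 : T.filter (fun a => d ≤ a) ⊆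
                (T.filter (fun a => c ≤ a)).erase c' := by
              intro a ha
              rw [Finset.mem_filter] at ha
              refine Finset.mem_erase.mpr ⟨?_, Finset.mem_filter.mpr ⟨ha.1, by
                linarith [ha.2]⟩⟩
              intro hec
              rw [hec] at ha
              linarith [ha.2]
            have h1 := Finset.card_le_card hsub2
            rw [Finset.card_erase_of_mem hc'mem] at h1
            omega
          set R1 := g c' with hR1
          have hR1E : R1 ∈ E c' := hgE c'
          have hRrest : R - R1 ∈ Mge xh d := by
            have hsum2 : R - R1 = ∑ a ∈ g.support.erase c', g a := by
              by_cases hmem : c' ∈ g.support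
              · rw [← hgsum, Finsupp.sum, ← Finset.add_sum_erase _ _ hmem, hR1]
                rw [add_sub_cancel_left]
              · rw [hR1, Finsupp.notMem_support_iff.mp hmem,
                  Finset.erase_eq_of_notMem hmem, ← hgsum, Finsupp.sum, sub_zero]
            rw [hsum2]
            refine Submodule.sum_mem _ fun a ha => ?_
            have haS := Finset.mem_of_mem_erase ha
            have hane : a ≠ c' := Finset.ne_of_mem_erase ha
            have h2 : c' < a := lt_of_le_of_ne (hgsupp' a haS) (Ne.symm hane)
            have h1 : K xh a ≠ ⊥ := by
              rw [Submodule.ne_bot_iff]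
              exact ⟨g a, hE_le_K a (hgE a), Finsupp.mem_support_iff.mp haS⟩
            have haT : a ∈ T := (hTmem a).mp ⟨lt_trans hc'pos h2, h1⟩
            have h3 : nxt ≤ a := hnxt_le a haT h2
            exact K_le_Mge xh (le_trans (min_le_right _ _) h3) (hE_le_K a (hgE a))
          obtain ⟨δ, hδE, hδeq⟩ := adx_surj c' (ne_of_gt hc'pos) (-R1)
            (Submodule.neg_mem _ hR1E)
          have hδbr : δ * x - x * δ = R1 := by
            rw [← neg_sub, hδeq, neg_neg]
          have hδg : δ ∈ 𝔤 := hE_le_g c' hδE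
          have hδM : δ ∈ Mge xh c' := K_le_Mge xh le_rfl (hE_le_K c' hδE)
          have hV''g : V + δ ∈ (𝔤 : Submodule ℝ (Mx n)) := Submodule.add_mem _ hVg hδg
          have hV''M : V + δ ∈ Mge xh s := Submodule.add_mem _ hVM (Mge_anti xh hsc' hδM)
          have hR''g : G V + R - G (V + δ) ∈ (𝔤 : Submodule ℝ (Mx n)) :=
            Submodule.sub_mem _ (Submodule.add_mem _ (hGg V hVg) hRg) (hGg _ hV''g)
          have hR''M : G V + R - G (V + δ) ∈ Mge xh d := by
            have hest' := hest V hVM c' hsc' δ hδM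
            have heq : G V + R - G (V + δ)
                = (R - R1) - (G (V + δ) - G V - (δ * x - x * δ)) := by
              rw [hδbr]
              abel
            rw [heq]
            exact Submodule.sub_mem _ hRrest (Mge_anti xh (min_le_left _ _) hest')
          obtain ⟨V', hV'g, hV'M, hGV'⟩ := ih d hd0 hcard' (V + δ) hV''g hV''M
            (G V + R - G (V + δ)) hR''g hR''M
          refine ⟨V', hV'g, hV'M, ?_⟩
          rw [hGV']
          abel
  have hG0 : G 0 = 0 := by
    rw [hG]
    refine Finset.sum_eq_zero fun k _ => ?_
    have hD0 : D 0 = 0 := by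
      ext Y
      rw [hbr]
      simp
    rw [hD0, zero_pow (Nat.succ_ne_zero k), LinearMap.zero_apply, smul_zero]
  -- the set equality
  ext y
  simp only [Set.mem_setOf_eq]
  constructor
  · rintro ⟨W, hWu, rfl⟩
    have hWM : W ∈ Mge xh s := hu_le_M hWu
    have hWg : W ∈ (𝔤 : Submodule ℝ (Mx n)) := hu_le_g hWu
    refine ⟨G W, ⟨hGg W hWg, ?_⟩, ?_⟩
    · intro V hVq
      exact trace_Mge_eq_zero xh (hGM W hWM) (hq_le_M hVq) (by linarith)
    · rw [← Matrix.exp_neg, hconj W hWM]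
  · rintro ⟨Z, ⟨hZg, hZtr⟩, rfl⟩
    obtain ⟨f, hfE, hfsum⟩ := hdecomp Z hZg
    have hfpos : ∀ a ∈ f.support, 0 < a := by
      intro a0 ha0
      by_contra hle
      push_neg at hle
      have hfa0 : f a0 = 0 := by
        have hVg : (f a0).transpose ∈ 𝔤 := hΘ _ (hE_le_g a0 (hfE a0))
        obtain ⟨g, hgE, hgsum⟩ := hdecomp _ hVg
        have hqmem : g (-a0) ∈ q := by
          rcases lt_or_eq_of_le hle with hlt | heq
          · have hEu : E (-a0) ≤ u := by
              rw [hu]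
              exact le_iSup_of_le (-a0)
                (le_iSup (fun _ : 0 < -a0 => E (-a0)) (by linarith))
            have huq : u ≤ q := by rw [hq]; exact le_sup_right
            exact huq (hEu (hgE (-a0)))
          · have hE0q : E 0 ≤ q := by rw [hq]; exact le_sup_left
            have : g (-a0) ∈ E 0 := by rw [heq, neg_zero] at *; exact hgE 0
            exact hE0q this
        -- trace of f a0 against g (-a0) vanishes
        have htr1 : (Z * g (-a0)).trace = ∑ a ∈ f.support, (f a * g (-a0)).trace := by
          rw [← hfsum, Finsupp.sum, Finset.sum_mul, Matrix.trace_sum]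
        have htr2 : ∑ a ∈ f.support, (f a * g (-a0)).trace = (f a0 * g (-a0)).trace := by
          refine Finset.sum_eq_single a0 ?_ ?_
          · intro a _ hne
            exact trace_K_eq_zero xh (hE_le_K a (hfE a)) (hE_le_K (-a0) (hgE (-a0)))
              (by intro hcon; apply hne; linarith)
          · intro h
            rw [Finsupp.notMem_support_iff.mp h, zero_mul, Matrix.trace_zero]
        have htr3 : (f a0 * g (-a0)).trace = 0 := by
          rw [← htr2, ← htr1]
          exact hZtr _ hqmem
        -- trace of f a0 against its transpose vanishes
        have htr4 : (f a0 * (f a0).transpose).trace = 0 := by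
          rw [← hgsum, Finsupp.sum, Finset.mul_sum, Matrix.trace_sum]
          rw [Finset.sum_eq_single (-a0)]
          · exact htr3
          · intro b _ hneb
            exact trace_K_eq_zero xh (hE_le_K a0 (hfE a0)) (hE_le_K b (hgE b))
              (by intro hcon; apply hneb; linarith)
          · intro h
            rw [Finsupp.notMem_support_iff.mp h, mul_zero, Matrix.trace_zero]
        exact eq_zero_of_trace_mul_transpose _ htr4
      exact (Finsupp.mem_support_iff.mp ha0) hfa0
    have hZM : Z ∈ Mge xh s := by
      rw [← hfsum, Finsupp.sum]
      refine Submodule.sum_mem _ fun a ha => ?_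
      have h1 : K xh a ≠ ⊥ := by
        rw [Submodule.ne_bot_iff]
        exact ⟨f a, hE_le_K a (hfE a), Finsupp.mem_support_iff.mp ha⟩
      have hs_le : s ≤ a := hTs a ((hTmem a).mp ⟨hfpos a ha, h1⟩)
      exact K_le_Mge xh hs_le (hE_le_K a (hfE a))
    obtain ⟨V', hV'g, hV'M, hGV'⟩ := key T.card s hs0
      (Finset.card_le_card (Finset.filter_subset _ _)) 0 (Submodule.zero_mem _)
      (Submodule.zero_mem _) Z hZg hZM
    refine ⟨V', hgM_le_u V' hV'g hV'M, ?_⟩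
    rw [← Matrix.exp_neg, hconj V' hV'M, hGV', hG0, zero_add]
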